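/- Let E be a real Banach space with weak type 2. Then there is a constant C > 0 such that for every n ∈ ℕ and all bounded linear maps u : ℓ²_n → E and v : E → ℓ²_n one has sup_{k≥1} k·a_k(v∘u) ≤ C·ℓ*(v)·π₂(u*). -/

import Mathlib

open MeasureTheory ProbabilityTheory NormedSpace

noncomputable section

/-- The `k`-th approximation number of a continuous linear map:
`a_k(T) = inf {‖T - S‖ : rank S < k}`. -/
def apxNum {X Y : Type*} [SeminormedAddCommGroup X] [NormedSpace ℝ X]
    [SeminormedAddCommGroup Y] [NormedSpace ℝ Y] (k : ℕ) (T : X →L[ℝ] Y) : ℝ :=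
  sInf {c : ℝ | ∃ S : X →L[ℝ] Y, LinearMap.rank (S : X →ₗ[ℝ] Y) < (k : Cardinal) ∧ c = ‖T - S‖}

/-- The standard Gaussian measure on `ℝⁿ`. -/
def gaussN (n : ℕ) : Measure (Fin n → ℝ) := Measure.pi fun _ => gaussianReal 0 1

/-- The ℓ-norm of `u : ℓ²ₙ → X`:
`ℓ(u) = (∫ ‖∑ tₖ u(eₖ)‖² dγₙ(t))^{1/2}`. -/
def ellNorm {X : Type*} [SeminormedAddCommGroup X] [NormedSpace ℝ X] {n : ℕ}
    (u : EuclideanSpace ℝ (Fin n) →L[ℝ] X) : ℝ :=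
  (∫ t, ‖∑ k, t k • u (EuclideanSpace.single k 1)‖ ^ 2 ∂(gaussN n)) ^ (1 / 2 : ℝ)

/-- The trace-dual norm of the ℓ-norm:
`ℓ*(v) = sup {|tr(v ∘ u)| : ℓ(u) ≤ 1}`. -/
def ellStar {X : Type*} [SeminormedAddCommGroup X] [NormedSpace ℝ X] {n : ℕ}
    (v : X →L[ℝ] EuclideanSpace ℝ (Fin n)) : ℝ :=
  sSup {c : ℝ | ∃ u : EuclideanSpace ℝ (Fin n) →L[ℝ] X, ellNorm u ≤ 1 ∧
    c = |LinearMap.trace ℝ (EuclideanSpace ℝ (Fin n)) ((v.comp u) : _ →ₗ[ℝ] _)|}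

/-- The weak-ℓ² norm of a finite family in `X`:
`sup {(∑ ξ(xᵢ)²)^{1/2} : ξ ∈ X*, ‖ξ‖ ≤ 1}`. -/
def weakl2 {X : Type*} [SeminormedAddCommGroup X] [NormedSpace ℝ X] {m : ℕ} (x : Fin m → X) : ℝ :=
  sSup {c : ℝ | ∃ ξ : X →L[ℝ] ℝ, ‖ξ‖ ≤ 1 ∧ c = (∑ i, ξ (x i) ^ 2) ^ (1 / 2 : ℝ)}

/-- The 2-summing norm `π₂(T)` of a continuous linear map. -/
def pi2 {X Y : Type*} [SeminormedAddCommGroup X] [NormedSpace ℝ X]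
    [SeminormedAddCommGroup Y] [NormedSpace ℝ Y] (T : X →L[ℝ] Y) : ℝ :=
  sInf {C : ℝ | 0 ≤ C ∧ ∀ (m : ℕ) (x : Fin m → X),
    (∑ i, ‖T (x i)‖ ^ 2) ^ (1 / 2 : ℝ) ≤ C * weakl2 x}

/-- The Banach-space adjoint (dual map) `T* : Y* → X*`. -/
def dualCLM {X Y : Type*} [SeminormedAddCommGroup X] [NormedSpace ℝ X]
    [SeminormedAddCommGroup Y] [NormedSpace ℝ Y] (T : X →L[ℝ] Y) :
    StrongDual ℝ Y →L[ℝ] StrongDual ℝ X :=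
  (ContinuousLinearMap.compL ℝ X Y ℝ).flip T

/-- The `k`-th Weyl number `x_k(T) = sup {a_k(T∘A) : A : ℓ₂ → X, ‖A‖ ≤ 1}`. -/
def weylNum {X Y : Type*} [SeminormedAddCommGroup X] [NormedSpace ℝ X]
    [SeminormedAddCommGroup Y] [NormedSpace ℝ Y] (k : ℕ) (T : X →L[ℝ] Y) : ℝ :=
  sSup {c : ℝ | ∃ A : (lp (fun _ : ℕ => ℝ) 2) →L[ℝ] X, ‖A‖ ≤ 1 ∧ c = apxNum k (T.comp A)}

/-- The Banach–Mazur distance between two normed spaces. -/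
def BMdist (X Y : Type*) [NormedAddCommGroup X] [NormedSpace ℝ X]
    [NormedAddCommGroup Y] [NormedSpace ℝ Y] : ℝ :=
  sInf {c : ℝ | ∃ w : X ≃L[ℝ] Y, c = ‖(w : X →L[ℝ] Y)‖ * ‖(w.symm : Y →L[ℝ] X)‖}

/-- The Hilbert–Schmidt norm of a map between finite-dimensional Euclidean spaces. -/
def HSnorm {n m : ℕ} (A : EuclideanSpace ℝ (Fin n) →L[ℝ] EuclideanSpace ℝ (Fin m)) : ℝ :=
  (∑ k, ‖A (EuclideanSpace.single k 1)‖ ^ 2) ^ (1 / 2 : ℝ)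

/-- `π₂*(u) = inf {‖A‖_HS ‖B‖ : u = B ∘ A}`, the trace dual of the 2-summing norm. -/
def pi2Star {X : Type*} [SeminormedAddCommGroup X] [NormedSpace ℝ X] {n : ℕ}
    (u : EuclideanSpace ℝ (Fin n) →L[ℝ] X) : ℝ :=
  sInf {c : ℝ | ∃ (m : ℕ) (A : EuclideanSpace ℝ (Fin n) →L[ℝ] EuclideanSpace ℝ (Fin m))
    (B : EuclideanSpace ℝ (Fin m) →L[ℝ] X), u = B.comp A ∧ c = HSnorm A * ‖B‖}

/-- `γ₂(T)`: factorization norm through a Hilbert space `ℓ²(ι)`. -/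
def gamma2 {X Y : Type*} [SeminormedAddCommGroup X] [NormedSpace ℝ X]
    [SeminormedAddCommGroup Y] [NormedSpace ℝ Y] (T : X →L[ℝ] Y) : ℝ :=
  sInf {c : ℝ | ∃ (ι : Type) (A : X →L[ℝ] lp (fun _ : ι => ℝ) 2)
    (B : (lp (fun _ : ι => ℝ) 2) →L[ℝ] Y), T = B.comp A ∧ c = ‖B‖ * ‖A‖}

/-- `X` has weak cotype 2 with constant `C`. -/
def WeakCotype2With (X : Type*) [NormedAddCommGroup X] [NormedSpace ℝ X] (C : ℝ) : Prop :=
  ∀ (n : ℕ) (u : EuclideanSpace ℝ (Fin n) →L[ℝ] X) (k : ℕ), 1 ≤ k →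
    Real.sqrt k * apxNum k u ≤ C * ellNorm u

/-- `X` has weak cotype 2. -/
def WeakCotype2 (X : Type*) [NormedAddCommGroup X] [NormedSpace ℝ X] : Prop :=
  ∃ C : ℝ, 0 < C ∧ WeakCotype2With X C

/-- `X` has weak type 2 with constant `C`. -/
def WeakType2With (X : Type*) [NormedAddCommGroup X] [NormedSpace ℝ X] (C : ℝ) : Prop :=
  ∀ (n : ℕ) (v : X →L[ℝ] EuclideanSpace ℝ (Fin n)) (k : ℕ), 1 ≤ k →
    Real.sqrt k * apxNum k v ≤ C * ellStar v

/-- `X` has weak type 2. -/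
def WeakType2 (X : Type*) [NormedAddCommGroup X] [NormedSpace ℝ X] : Prop :=
  ∃ C : ℝ, 0 < C ∧ WeakType2With X C

/-- The weak cotype 2 constant of `X`. -/
def wC2 (X : Type*) [NormedAddCommGroup X] [NormedSpace ℝ X] : ℝ :=
  sInf {C : ℝ | 0 ≤ C ∧ WeakCotype2With X C}

/-- The weak type 2 constant of `X`. -/
def wT2 (X : Type*) [NormedAddCommGroup X] [NormedSpace ℝ X] : ℝ :=
  sInf {C : ℝ | 0 ≤ C ∧ WeakType2With X C}

/-- The `k`-th Gaussian coefficient of `f : ℝⁿ → X`: `∫ gₖ(s) f(s) dγₙ(s)`. -/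
def gaussCoeff {X : Type*} [NormedAddCommGroup X] [NormedSpace ℝ X] {n : ℕ}
    (f : (Fin n → ℝ) → X) (k : Fin n) : X :=
  ∫ s, s k • f s ∂(gaussN n)

/-- The Gaussian projection `Qₙ` is bounded by `C` on `L²(γₙ; X)` for every `n`. -/
def KConvexWith (X : Type*) [NormedAddCommGroup X] [NormedSpace ℝ X] (C : ℝ) : Prop :=
  ∀ (n : ℕ) (f : (Fin n → ℝ) → X), MemLp f 2 (gaussN n) →
    (∫ t, ‖∑ k, t k • gaussCoeff f k‖ ^ 2 ∂(gaussN n)) ^ (1 / 2 : ℝ) ≤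
      C * (∫ t, ‖f t‖ ^ 2 ∂(gaussN n)) ^ (1 / 2 : ℝ)

/-- `X` is K-convex. -/
def KConvex (X : Type*) [NormedAddCommGroup X] [NormedSpace ℝ X] : Prop :=
  ∃ C : ℝ, 0 < C ∧ KConvexWith X C

/-- The K-convexity constant of `X`. -/
def Kconst (X : Type*) [NormedAddCommGroup X] [NormedSpace ℝ X] : ℝ :=
  sInf {C : ℝ | 0 ≤ C ∧ KConvexWith X C}


namespace Stmt11Aux

open ContinuousLinearMap

section ApxNum

variable {X Y : Type*} [SeminormedAddCommGroup X] [NormedSpace ℝ X]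
  [SeminormedAddCommGroup Y] [NormedSpace ℝ Y]

lemma apxNum_set_bddBelow (k : ℕ) (T : X →L[ℝ] Y) :
    BddBelow {c : ℝ | ∃ S : X →L[ℝ] Y,
      LinearMap.rank (S : X →ₗ[ℝ] Y) < (k : Cardinal) ∧ c = ‖T - S‖} := by
  refine ⟨0, fun c hc => ?_⟩
  obtain ⟨S, -, rfl⟩ := hc
  exact norm_nonneg _

lemma rank_zero_lt (k : ℕ) (hk : 1 ≤ k) :
    LinearMap.rank ((0 : X →L[ℝ] Y) : X →ₗ[ℝ] Y) < (k : Cardinal) := by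
  have : ((0 : X →L[ℝ] Y) : X →ₗ[ℝ] Y) = 0 := rfl
  rw [this, LinearMap.rank_zero]
  have : (0 : Cardinal) < (k : Cardinal) := by
    exact_mod_cast Nat.lt_of_lt_of_le Nat.zero_lt_one hk
  exact this

lemma apxNum_set_nonempty (k : ℕ) (hk : 1 ≤ k) (T : X →L[ℝ] Y) :
    Set.Nonempty {c : ℝ | ∃ S : X →L[ℝ] Y,
      LinearMap.rank (S : X →ₗ[ℝ] Y) < (k : Cardinal) ∧ c = ‖T - S‖} :=
  ⟨‖T - 0‖, 0, rank_zero_lt k hk, rfl⟩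

lemma apxNum_nonneg (k : ℕ) (T : X →L[ℝ] Y) : 0 ≤ apxNum k T := by
  apply Real.sInf_nonneg
  rintro c ⟨S, -, rfl⟩
  exact norm_nonneg _

lemma apxNum_le (k : ℕ) (T S : X →L[ℝ] Y)
    (hS : LinearMap.rank (S : X →ₗ[ℝ] Y) < (k : Cardinal)) :
    apxNum k T ≤ ‖T - S‖ :=
  csInf_le (apxNum_set_bddBelow k T) ⟨S, hS, rfl⟩

lemma apxNum_antitone {j k : ℕ} (hj : 1 ≤ j) (hjk : j ≤ k) (T : X →L[ℝ] Y) :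
    apxNum k T ≤ apxNum j T := by
  apply csInf_le_csInf (apxNum_set_bddBelow k T) (apxNum_set_nonempty j hj T)
  rintro c ⟨S, hS, rfl⟩
  exact ⟨S, lt_of_lt_of_le hS (by exact_mod_cast hjk), rfl⟩

lemma exists_apx (k : ℕ) (hk : 1 ≤ k) (T : X →L[ℝ] Y) {ε : ℝ} (hε : 0 < ε) :
    ∃ S : X →L[ℝ] Y, LinearMap.rank (S : X →ₗ[ℝ] Y) < (k : Cardinal) ∧
      ‖T - S‖ < apxNum k T + ε := by
  obtain ⟨c, hc, hlt⟩ := Real.lt_sInf_add_pos (apxNum_set_nonempty k hk T) hε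
  obtain ⟨S, hS, rfl⟩ := hc
  exact ⟨S, hS, hlt⟩

end ApxNum

lemma ellStar_nonneg {X : Type*} [SeminormedAddCommGroup X] [NormedSpace ℝ X] {n : ℕ}
    (v : X →L[ℝ] EuclideanSpace ℝ (Fin n)) : 0 ≤ ellStar v := by
  apply Real.sSup_nonneg
  rintro c ⟨u, -, rfl⟩
  exact abs_nonneg _

lemma pi2_nonneg {X Y : Type*} [SeminormedAddCommGroup X] [NormedSpace ℝ X]
    [SeminormedAddCommGroup Y] [NormedSpace ℝ Y] (T : X →L[ℝ] Y) : 0 ≤ pi2 T := by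
  apply Real.sInf_nonneg
  rintro c ⟨hc, -⟩
  exact hc

end Stmt11Aux
namespace Stmt11Aux2
open Stmt11Aux

-- Cauchy-Schwarz with square roots for real sums
lemma cs_sqrt {n : ℕ} (f g : Fin n → ℝ) :
    |∑ i, f i * g i| ≤ Real.sqrt (∑ i, f i ^ 2) * Real.sqrt (∑ i, g i ^ 2) := by
  have h := Finset.sum_mul_sq_le_sq_mul_sq Finset.univ f g
  have h1 : |∑ i, f i * g i| = Real.sqrt ((∑ i, f i * g i) ^ 2) := by
    rw [Real.sqrt_sq_eq_abs]
  rw [h1, ← Real.sqrt_mul (by positivity)]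
  exact Real.sqrt_le_sqrt h

/-- The operator norm squared of a functional on Euclidean space. -/
lemma dual_norm_sq {n : ℕ} (η : EuclideanSpace ℝ (Fin n) →L[ℝ] ℝ) :
    ‖η‖ ^ 2 = ∑ j, (η (EuclideanSpace.single j 1)) ^ 2 := by
  obtain ⟨y, rfl⟩ := (InnerProductSpace.toDual ℝ (EuclideanSpace ℝ (Fin n))).surjective η
  rw [LinearIsometryEquiv.norm_map]
  have hy : ∀ j, (InnerProductSpace.toDual ℝ (EuclideanSpace ℝ (Fin n)) y)
      (EuclideanSpace.single j 1) = y j := by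
    intro j
    rw [InnerProductSpace.toDual_apply_apply]
    simpa using EuclideanSpace.inner_single_right (𝕜 := ℝ) j 1 y
  simp_rw [hy]
  rw [EuclideanSpace.norm_eq, Real.sq_sqrt (by positivity)]
  congr 1
  ext j
  rw [Real.norm_eq_abs, sq_abs]

end Stmt11Aux2
namespace Stmt11Aux3
open Stmt11Aux Stmt11Aux2 NormedSpace

lemma rpow_half_eq_sqrt (a : ℝ) : a ^ (1 / 2 : ℝ) = Real.sqrt a :=
  (Real.sqrt_eq_rpow a).symm

variable {X : Type*} [SeminormedAddCommGroup X] [NormedSpace ℝ X]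

lemma weakl2_set_bddAbove {m : ℕ} (x : Fin m → X) :
    BddAbove {c : ℝ | ∃ ξ : X →L[ℝ] ℝ, ‖ξ‖ ≤ 1 ∧ c = (∑ i, ξ (x i) ^ 2) ^ (1 / 2 : ℝ)} := by
  refine ⟨(∑ i, ‖x i‖ ^ 2) ^ (1 / 2 : ℝ), fun c hc => ?_⟩
  obtain ⟨ξ, hξ, rfl⟩ := hc
  apply Real.rpow_le_rpow (by positivity) _ (by norm_num)
  apply Finset.sum_le_sum
  intro i _
  have h1 : |ξ (x i)| ≤ ‖x i‖ := by
    calc |ξ (x i)| = ‖ξ (x i)‖ := rfl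
    _ ≤ ‖ξ‖ * ‖x i‖ := ξ.le_opNorm _
    _ ≤ 1 * ‖x i‖ := by gcongr
    _ = ‖x i‖ := one_mul _
  calc ξ (x i) ^ 2 = |ξ (x i)| ^ 2 := (sq_abs _).symm
  _ ≤ ‖x i‖ ^ 2 := by gcongr

lemma weakl2_nonneg {m : ℕ} (x : Fin m → X) : 0 ≤ weakl2 x := by
  apply Real.sSup_nonneg
  rintro c ⟨ξ, -, rfl⟩
  positivity

/-- pointwise bound: for any point `p`, `∑ᵢ (ξᵢ p)² ≤ weakl2(ξ)² ‖p‖²` where the `ξᵢ ∈ X*`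
    are viewed as a family in the dual, tested against the double dual. -/
lemma sum_sq_apply_le {m : ℕ} (ξ : Fin m → (X →L[ℝ] ℝ))
    (p : X) : ∑ i, (ξ i p) ^ 2 ≤ weakl2 ξ ^ 2 * ‖p‖ ^ 2 := by
  rcases eq_or_ne ‖p‖ 0 with hp | hp
  · have hzero : ∀ i, ξ i p = 0 := by
      intro i
      have := (ξ i).le_opNorm p
      rw [hp, mul_zero] at this
      simpa [norm_eq_zero] using le_antisymm this (norm_nonneg _)
    have : ∑ i, (ξ i p) ^ 2 = 0 := by simp [hzero]
    rw [this]
    positivity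
  · have hppos : 0 < ‖p‖ := lt_of_le_of_ne (norm_nonneg _) (Ne.symm hp)
    set Ξ : (X →L[ℝ] ℝ) →L[ℝ] ℝ := ‖p‖⁻¹ • (inclusionInDoubleDual ℝ X p) with hΞdef
    have hΞapp : ∀ f : X →L[ℝ] ℝ, Ξ f = ‖p‖⁻¹ * f p := by
      intro f
      rw [hΞdef, ContinuousLinearMap.smul_apply, dual_def, smul_eq_mul]
    have hΞ : ‖Ξ‖ ≤ 1 := by
      apply ContinuousLinearMap.opNorm_le_bound _ zero_le_one
      intro f
      rw [hΞapp f, one_mul, Real.norm_eq_abs, abs_mul, abs_of_nonneg (by positivity : (0:ℝ) ≤ ‖p‖⁻¹)]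
      calc ‖p‖⁻¹ * |f p| ≤ ‖p‖⁻¹ * (‖f‖ * ‖p‖) := by
            gcongr
            exact f.le_opNorm p
      _ = (‖p‖⁻¹ * ‖p‖) * ‖f‖ := by ring
      _ = ‖f‖ := by rw [inv_mul_cancel₀ hp, one_mul]
    have hmem : (∑ i, (Ξ (ξ i)) ^ 2) ^ (1 / 2 : ℝ) ∈
        {c : ℝ | ∃ Ξ' : (X →L[ℝ] ℝ) →L[ℝ] ℝ, ‖Ξ'‖ ≤ 1 ∧
          c = (∑ i, Ξ' (ξ i) ^ 2) ^ (1 / 2 : ℝ)} := ⟨Ξ, hΞ, rfl⟩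
    have hle : (∑ i, (Ξ (ξ i)) ^ 2) ^ (1 / 2 : ℝ) ≤ weakl2 ξ :=
      le_csSup (weakl2_set_bddAbove ξ) hmem
    rw [rpow_half_eq_sqrt] at hle
    have hsq : (∑ i, (Ξ (ξ i)) ^ 2) ≤ weakl2 ξ ^ 2 := by
      have h0 : (0:ℝ) ≤ ∑ i, (Ξ (ξ i)) ^ 2 := by positivity
      have h1 := pow_le_pow_left₀ (Real.sqrt_nonneg _) hle 2
      rwa [Real.sq_sqrt h0] at h1
    have hexp : ∑ i, (ξ i p) ^ 2 = ‖p‖ ^ 2 * ∑ i, (Ξ (ξ i)) ^ 2 := by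
      rw [Finset.mul_sum]
      congr 1; ext i
      rw [hΞapp (ξ i), mul_pow]
      rw [← mul_assoc]
      have : ‖p‖ ^ 2 * (‖p‖⁻¹) ^ 2 = 1 := by
        field_simp
      rw [this, one_mul]
    rw [hexp, mul_comm]
    exact mul_le_mul_of_nonneg_right hsq (by positivity)

end Stmt11Aux3
namespace Stmt11Aux4
open Stmt11Aux Stmt11Aux2 Stmt11Aux3 NormedSpace

lemma euclid_norm_sq {n : ℕ} (x : EuclideanSpace ℝ (Fin n)) :
    ‖x‖ ^ 2 = ∑ i, (x i) ^ 2 := by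
  rw [EuclideanSpace.norm_eq, Real.sq_sqrt (by positivity)]
  congr 1; ext i
  rw [Real.norm_eq_abs, sq_abs]

variable {E : Type*} [NormedAddCommGroup E] [NormedSpace ℝ E]

lemma dualCLM_apply {n : ℕ} (u : EuclideanSpace ℝ (Fin n) →L[ℝ] E) (ξ : StrongDual ℝ E) :
    dualCLM u ξ = ξ.comp u := rfl

/-- The defining set of `pi2 (dualCLM u)` is nonempty. -/
lemma pi2_set_nonempty {n : ℕ} (u : EuclideanSpace ℝ (Fin n) →L[ℝ] E) :
    Set.Nonempty {C : ℝ | 0 ≤ C ∧ ∀ (m : ℕ) (x : Fin m → StrongDual ℝ E),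
      (∑ i, ‖(dualCLM u) (x i)‖ ^ 2) ^ (1 / 2 : ℝ) ≤ C * weakl2 x} := by
  refine ⟨Real.sqrt (∑ j, ‖u (EuclideanSpace.single j 1)‖ ^ 2), Real.sqrt_nonneg _, ?_⟩
  intro m x
  rw [rpow_half_eq_sqrt]
  have hterm : ∀ i, ‖(dualCLM u) (x i)‖ ^ 2
      = ∑ j, ((x i) (u (EuclideanSpace.single j 1))) ^ 2 := by
    intro i
    rw [dual_norm_sq ((dualCLM u) (x i))]
    rfl
  have hswap : (∑ i, ‖(dualCLM u) (x i)‖ ^ 2)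
      = ∑ j, ∑ i, ((x i) (u (EuclideanSpace.single j 1))) ^ 2 := by
    simp_rw [hterm]
    rw [Finset.sum_comm]
  have hbound : (∑ i, ‖(dualCLM u) (x i)‖ ^ 2)
      ≤ weakl2 x ^ 2 * ∑ j, ‖u (EuclideanSpace.single j 1)‖ ^ 2 := by
    rw [hswap, Finset.mul_sum]
    apply Finset.sum_le_sum
    intro j _
    exact sum_sq_apply_le x (u (EuclideanSpace.single j 1))
  calc Real.sqrt (∑ i, ‖(dualCLM u) (x i)‖ ^ 2)
      ≤ Real.sqrt (weakl2 x ^ 2 * ∑ j, ‖u (EuclideanSpace.single j 1)‖ ^ 2) :=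
        Real.sqrt_le_sqrt hbound
  _ = weakl2 x * Real.sqrt (∑ j, ‖u (EuclideanSpace.single j 1)‖ ^ 2) := by
        rw [Real.sqrt_mul (by positivity), Real.sqrt_sq (weakl2_nonneg x)]
  _ = Real.sqrt (∑ j, ‖u (EuclideanSpace.single j 1)‖ ^ 2) * weakl2 x := mul_comm _ _

/-- Key Hilbert–Schmidt bound: `HS(z ∘ u) ≤ π₂(u*) ‖z‖`. -/
lemma hs_le_pi2_mul {n : ℕ} (u : EuclideanSpace ℝ (Fin n) →L[ℝ] E)
    (z : E →L[ℝ] EuclideanSpace ℝ (Fin n)) :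
    Real.sqrt (∑ j, ‖(z.comp u) (EuclideanSpace.single j 1)‖ ^ 2)
      ≤ pi2 (dualCLM u) * ‖z‖ := by
  classical
  set ξ : Fin n → StrongDual ℝ E :=
    fun i => ((EuclideanSpace.proj i : EuclideanSpace ℝ (Fin n) →L[ℝ] ℝ)).comp z with hξdef
  have hξapp : ∀ (i : Fin n) (p : E), ξ i p = (z p) i := fun i p => rfl
  -- the HS sum as a sum over the dual family
  have hkey : (∑ j, ‖(z.comp u) (EuclideanSpace.single j 1)‖ ^ 2)
      = ∑ i, ‖(dualCLM u) (ξ i)‖ ^ 2 := by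
    have h1 : ∀ j, ‖(z.comp u) (EuclideanSpace.single j 1)‖ ^ 2
        = ∑ i, (ξ i (u (EuclideanSpace.single j 1))) ^ 2 := by
      intro j
      rw [euclid_norm_sq]
      rfl
    have h2 : ∀ i, ‖(dualCLM u) (ξ i)‖ ^ 2
        = ∑ j, (ξ i (u (EuclideanSpace.single j 1))) ^ 2 :=
      fun i => dual_norm_sq _
    simp_rw [h1, h2]
    rw [Finset.sum_comm]
  -- weak-l2 norm of the family is at most ‖z‖
  have hweak : weakl2 ξ ≤ ‖z‖ := by
    apply csSup_le
    · exact ⟨(∑ i, ((0 : StrongDual ℝ (StrongDual ℝ E)) (ξ i)) ^ 2) ^ (1 / 2 : ℝ), 0, by simp, rfl⟩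
    rintro c ⟨Ξ, hΞ, rfl⟩
    rw [rpow_half_eq_sqrt]
    set y : Fin n → ℝ := fun i => Ξ (ξ i) with hydef
    set t : ℝ := Real.sqrt (∑ i, y i ^ 2) with htdef
    have ht0 : 0 ≤ t := Real.sqrt_nonneg _
    have htsq : t ^ 2 = ∑ i, y i ^ 2 := Real.sq_sqrt (by positivity)
    -- norm bound on the combined functional
    have hcomb : ‖∑ i, y i • ξ i‖ ≤ t * ‖z‖ := by
      apply ContinuousLinearMap.opNorm_le_bound _ (by positivity)
      intro p
      have happ : (∑ i, y i • ξ i) p = ∑ i, y i * (ξ i p) := by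
        simp
      rw [happ, Real.norm_eq_abs]
      have hzp : ∑ i, (ξ i p) ^ 2 = ‖z p‖ ^ 2 := by
        rw [euclid_norm_sq]
        rfl
      calc |∑ i, y i * (ξ i p)|
          ≤ Real.sqrt (∑ i, y i ^ 2) * Real.sqrt (∑ i, (ξ i p) ^ 2) := cs_sqrt y _
      _ = t * Real.sqrt (‖z p‖ ^ 2) := by rw [htdef, hzp]
      _ = t * ‖z p‖ := by rw [Real.sqrt_sq (norm_nonneg _)]
      _ ≤ t * (‖z‖ * ‖p‖) := mul_le_mul_of_nonneg_left (z.le_opNorm p) ht0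
      _ = t * ‖z‖ * ‖p‖ := by ring
    have hsum : ∑ i, y i ^ 2 ≤ t * ‖z‖ := by
      have h1 : ∑ i, y i ^ 2 = Ξ (∑ i, y i • ξ i) := by
        rw [map_sum]
        congr 1; ext i
        rw [_root_.map_smul, smul_eq_mul, hydef]
        ring
      calc ∑ i, y i ^ 2 = Ξ (∑ i, y i • ξ i) := h1
      _ ≤ |Ξ (∑ i, y i • ξ i)| := le_abs_self _
      _ ≤ ‖Ξ‖ * ‖∑ i, y i • ξ i‖ := Ξ.le_opNorm _
      _ ≤ 1 * (t * ‖z‖) := by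
            apply mul_le_mul hΞ hcomb (norm_nonneg _) zero_le_one
      _ = t * ‖z‖ := one_mul _
    -- conclude t ≤ ‖z‖
    rcases eq_or_lt_of_le ht0 with ht | ht
    · rw [← ht]
      exact norm_nonneg _
    · have : t * t ≤ t * ‖z‖ := by
        calc t * t = t ^ 2 := (sq t).symm
        _ = ∑ i, y i ^ 2 := htsq
        _ ≤ t * ‖z‖ := hsum
      exact le_of_mul_le_mul_left this ht
  -- conclude using the definition of pi2 as an infimum
  have hall : ∀ Cc ∈ {C : ℝ | 0 ≤ C ∧ ∀ (m : ℕ) (x : Fin m → StrongDual ℝ E),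
      (∑ i, ‖(dualCLM u) (x i)‖ ^ 2) ^ (1 / 2 : ℝ) ≤ C * weakl2 x},
      Real.sqrt (∑ j, ‖(z.comp u) (EuclideanSpace.single j 1)‖ ^ 2) ≤ Cc * ‖z‖ := by
    rintro Cc ⟨hCc0, hCc⟩
    have := hCc n ξ
    rw [rpow_half_eq_sqrt, ← hkey] at this
    calc Real.sqrt (∑ j, ‖(z.comp u) (EuclideanSpace.single j 1)‖ ^ 2)
        ≤ Cc * weakl2 ξ := this
    _ ≤ Cc * ‖z‖ := by
        apply mul_le_mul_of_nonneg_left hweak hCc0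
  rcases eq_or_ne ‖z‖ 0 with hz | hz
  · have hzz : z = 0 := norm_eq_zero.mp hz
    have : (∑ j, ‖(z.comp u) (EuclideanSpace.single j 1)‖ ^ 2) = 0 := by
      simp [hzz]
    rw [this, Real.sqrt_zero, hz, mul_zero]
  · have hzpos : 0 < ‖z‖ := lt_of_le_of_ne (norm_nonneg _) (Ne.symm hz)
    have hlb : Real.sqrt (∑ j, ‖(z.comp u) (EuclideanSpace.single j 1)‖ ^ 2) / ‖z‖
        ≤ pi2 (dualCLM u) := by
      apply le_csInf (pi2_set_nonempty u)
      intro Cc hCc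
      rw [div_le_iff₀ hzpos]
      exact hall Cc hCc
    calc Real.sqrt (∑ j, ‖(z.comp u) (EuclideanSpace.single j 1)‖ ^ 2)
        = (Real.sqrt (∑ j, ‖(z.comp u) (EuclideanSpace.single j 1)‖ ^ 2) / ‖z‖) * ‖z‖ := by
          field_simp
    _ ≤ pi2 (dualCLM u) * ‖z‖ := by
          apply mul_le_mul_of_nonneg_right hlb (norm_nonneg _)

end Stmt11Aux4
namespace Stmt11Aux5
open Stmt11Aux Stmt11Aux2 Stmt11Aux3 Stmt11Aux4
open scoped InnerProductSpace

/-- A sum of rank-one operators has rank bounded by the number of terms. -/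
lemma exists_rank_lt_approx {n k : ℕ} (s : Finset (Fin n)) (hcard : s.card < k)
    (b g : Fin n → EuclideanSpace ℝ (Fin n)) :
    ∃ S : EuclideanSpace ℝ (Fin n) →L[ℝ] EuclideanSpace ℝ (Fin n),
      (∀ x, S x = ∑ i ∈ s, ⟪b i, x⟫_ℝ • g i) ∧
      LinearMap.rank ((S : EuclideanSpace ℝ (Fin n) →L[ℝ] EuclideanSpace ℝ (Fin n)) :
        EuclideanSpace ℝ (Fin n) →ₗ[ℝ] EuclideanSpace ℝ (Fin n)) < (k : Cardinal) := by
  classical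
  refine ⟨∑ i ∈ s, (innerSL ℝ (b i)).smulRight (g i), ?_, ?_⟩
  · intro x
    rw [ContinuousLinearMap.sum_apply]
    rfl
  · have hle : LinearMap.range
        ((∑ i ∈ s, (innerSL ℝ (b i)).smulRight (g i) :
          EuclideanSpace ℝ (Fin n) →L[ℝ] EuclideanSpace ℝ (Fin n)) :
          EuclideanSpace ℝ (Fin n) →ₗ[ℝ] EuclideanSpace ℝ (Fin n))
        ≤ Submodule.span ℝ (↑(s.image g)) := by
      rintro p ⟨x, rfl⟩
      have hco : ((∑ i ∈ s, (innerSL ℝ (b i)).smulRight (g i) :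
          EuclideanSpace ℝ (Fin n) →L[ℝ] EuclideanSpace ℝ (Fin n)) :
          EuclideanSpace ℝ (Fin n) →ₗ[ℝ] EuclideanSpace ℝ (Fin n)) x
          = ∑ i ∈ s, ⟪b i, x⟫_ℝ • g i := by
        rw [ContinuousLinearMap.coe_coe, ContinuousLinearMap.sum_apply]
        rfl
      rw [hco]
      apply Submodule.sum_mem
      intro i hi
      apply Submodule.smul_mem
      apply Submodule.subset_span
      simp only [Finset.coe_image, Set.mem_image, Finset.mem_coe]
      exact ⟨i, hi, rfl⟩
    have h1 : LinearMap.rank ((∑ i ∈ s, (innerSL ℝ (b i)).smulRight (g i) :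
          EuclideanSpace ℝ (Fin n) →L[ℝ] EuclideanSpace ℝ (Fin n)) :
          EuclideanSpace ℝ (Fin n) →ₗ[ℝ] EuclideanSpace ℝ (Fin n))
        ≤ Module.rank ℝ (Submodule.span ℝ ((↑(s.image g)) : Set (EuclideanSpace ℝ (Fin n)))) :=
      Submodule.rank_mono hle
    have h2 := rank_span_le (R := ℝ) ((↑(s.image g)) : Set (EuclideanSpace ℝ (Fin n)))
    have h3 : Cardinal.mk ((↑(s.image g)) : Set (EuclideanSpace ℝ (Fin n)))
        = ((s.image g).card : Cardinal) := Cardinal.mk_coe_finset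
    have h4 : ((s.image g).card : Cardinal) ≤ (s.card : Cardinal) := by
      exact_mod_cast Finset.card_image_le
    have h5 : (s.card : Cardinal) < (k : Cardinal) := by exact_mod_cast hcard
    calc LinearMap.rank ((∑ i ∈ s, (innerSL ℝ (b i)).smulRight (g i) :
          EuclideanSpace ℝ (Fin n) →L[ℝ] EuclideanSpace ℝ (Fin n)) :
          EuclideanSpace ℝ (Fin n) →ₗ[ℝ] EuclideanSpace ℝ (Fin n))
        ≤ Module.rank ℝ (Submodule.span ℝ ((↑(s.image g)) : Set (EuclideanSpace ℝ (Fin n)))) := h1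
    _ ≤ Cardinal.mk ((↑(s.image g)) : Set (EuclideanSpace ℝ (Fin n))) := h2
    _ = ((s.image g).card : Cardinal) := h3
    _ ≤ (s.card : Cardinal) := h4
    _ < (k : Cardinal) := h5


/-- Hilbert–Schmidt sums over orthonormal bases: change of basis via the adjoint. -/
lemma sum_norm_sq_basis {n : ℕ}
    (w : EuclideanSpace ℝ (Fin n) →L[ℝ] EuclideanSpace ℝ (Fin n))
    (b c : OrthonormalBasis (Fin n) ℝ (EuclideanSpace ℝ (Fin n))) :
    ∑ i, ‖w (b i)‖ ^ 2 = ∑ j, ‖(ContinuousLinearMap.adjoint w) (c j)‖ ^ 2 := by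
  have h1 : ∀ i, ‖w (b i)‖ ^ 2 = ∑ j, ⟪w (b i), c j⟫_ℝ * ⟪c j, w (b i)⟫_ℝ := by
    intro i
    rw [c.sum_inner_mul_inner]
    exact (real_inner_self_eq_norm_sq _).symm
  have h2 : ∀ j, ‖(ContinuousLinearMap.adjoint w) (c j)‖ ^ 2
      = ∑ i, ⟪(ContinuousLinearMap.adjoint w) (c j), b i⟫_ℝ *
        ⟪b i, (ContinuousLinearMap.adjoint w) (c j)⟫_ℝ := by
    intro j
    rw [b.sum_inner_mul_inner]
    exact (real_inner_self_eq_norm_sq _).symm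
  simp_rw [h1, h2]
  rw [Finset.sum_comm]
  congr 1; ext j; congr 1; ext i
  have e1 : ⟪w (b i), c j⟫_ℝ = ⟪b i, (ContinuousLinearMap.adjoint w) (c j)⟫_ℝ :=
    (ContinuousLinearMap.adjoint_inner_right w (b i) (c j)).symm
  have e2 : ⟪c j, w (b i)⟫_ℝ = ⟪(ContinuousLinearMap.adjoint w) (c j), b i⟫_ℝ :=
    (ContinuousLinearMap.adjoint_inner_left w (b i) (c j)).symm
  rw [e1, e2]
  ring

set_option maxHeartbeats 1000000 in
/-- `√k · a_k(w) ≤ HS(w)` for operators on finite-dimensional Euclidean space. -/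
lemma sqrtk_apxNum_le_hs {n k : ℕ} (hk : 1 ≤ k)
    (w : EuclideanSpace ℝ (Fin n) →L[ℝ] EuclideanSpace ℝ (Fin n)) :
    Real.sqrt k * apxNum k w
      ≤ Real.sqrt (∑ j, ‖w (EuclideanSpace.single j 1)‖ ^ 2) := by
  classical
  obtain ⟨Q, hQdef⟩ : ∃ q : ℝ, q = ∑ j, ‖w (EuclideanSpace.single j 1)‖ ^ 2 := ⟨_, rfl⟩
  rw [← hQdef]
  have hQ0 : (0:ℝ) ≤ Q := by rw [hQdef]; positivity
  have hkR : (0:ℝ) < (k:ℝ) := by exact_mod_cast Nat.lt_of_lt_of_le Nat.zero_lt_one hk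
  set L : EuclideanSpace ℝ (Fin n) →ₗ[ℝ] EuclideanSpace ℝ (Fin n) :=
    (((ContinuousLinearMap.adjoint w).comp w :
      EuclideanSpace ℝ (Fin n) →L[ℝ] EuclideanSpace ℝ (Fin n)) :
      EuclideanSpace ℝ (Fin n) →ₗ[ℝ] EuclideanSpace ℝ (Fin n)) with hLdef
  have hLapp : ∀ x, L x = (ContinuousLinearMap.adjoint w) (w x) := fun x => rfl
  have hsym : L.IsSymmetric := by
    intro x y
    rw [hLapp, hLapp]
    rw [ContinuousLinearMap.adjoint_inner_left, ContinuousLinearMap.adjoint_inner_right]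
  have hn : Module.finrank ℝ (EuclideanSpace ℝ (Fin n)) = n := finrank_euclideanSpace_fin
  set b := hsym.eigenvectorBasis hn with hbdef
  set μ := hsym.eigenvalues hn with hμdef
  have hLb : ∀ i, L (b i) = μ i • b i := by
    intro i
    have h := hsym.apply_eigenvectorBasis hn i
    exact_mod_cast h
  have horth : ∀ i j, ⟪w (b i), w (b j)⟫_ℝ = if i = j then μ i else 0 := by
    intro i j
    have h1 : ⟪w (b i), w (b j)⟫_ℝ = ⟪L (b i), b j⟫_ℝ := by
      rw [hLapp, ContinuousLinearMap.adjoint_inner_left]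
    rw [h1, hLb i, real_inner_smul_left]
    rw [orthonormal_iff_ite.mp b.orthonormal i j]
    rcases eq_or_ne i j with h | h
    · simp [h]
    · simp [h]
  have hμeq : ∀ i, μ i = ‖w (b i)‖ ^ 2 := by
    intro i
    have := horth i i
    rw [if_pos rfl, real_inner_self_eq_norm_sq] at this
    exact this.symm
  have hμ0 : ∀ i, 0 ≤ μ i := fun i => (hμeq i) ▸ sq_nonneg _
  -- the HS sum computed in the eigenbasis
  have hQb : ∑ i, ‖w (b i)‖ ^ 2 = Q := by
    have h1 := sum_norm_sq_basis w b (EuclideanSpace.basisFun (Fin n) ℝ)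
    have h2 := sum_norm_sq_basis w (EuclideanSpace.basisFun (Fin n) ℝ)
      (EuclideanSpace.basisFun (Fin n) ℝ)
    rw [h1, ← h2, hQdef]
    congr 1; ext j
    rw [EuclideanSpace.basisFun_apply]
  have hQμ : ∑ i, μ i = Q := by
    rw [← hQb]
    congr 1; ext i
    exact hμeq i
  -- the set of large eigenvalues has fewer than k elements
  set s : Finset (Fin n) := Finset.univ.filter (fun i => Q / k < μ i) with hsdef
  have hcard : s.card < k := by
    by_contra hcon
    push_neg at hcon
    have hspos : s.Nonempty := by
      rw [← Finset.card_pos]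
      omega
    have h2 : (s.card : ℝ) * (Q / k) < ∑ i ∈ s, μ i := by
      have hlt := Finset.sum_lt_sum_of_nonempty hspos
        (f := fun _ => Q / (k:ℝ)) (g := fun i => μ i) ?_
      · calc (s.card : ℝ) * (Q / k) = ∑ _i ∈ s, Q / (k:ℝ) := by
              rw [Finset.sum_const, nsmul_eq_mul]
        _ < ∑ i ∈ s, μ i := hlt
      · intro i hi
        exact (Finset.mem_filter.mp hi).2
    have h3 : ∑ i ∈ s, μ i ≤ Q := by
      rw [← hQμ]
      apply Finset.sum_le_sum_of_subset_of_nonneg (Finset.subset_univ s)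
      intro i _ _
      exact hμ0 i
    have h4 : Q ≤ (s.card : ℝ) * (Q / k) := by
      have hQk : (k:ℝ) * (Q / k) = Q := by field_simp
      calc Q = (k:ℝ) * (Q / k) := hQk.symm
      _ ≤ (s.card : ℝ) * (Q / k) := by
          apply mul_le_mul_of_nonneg_right _ (by positivity)
          exact_mod_cast hcon
    linarith
  -- the near-optimal finite-rank approximation
  obtain ⟨Sop, hSapp, hrank⟩ := exists_rank_lt_approx s hcard (fun i => b i) (fun i => w (b i))
  -- the norm bound
  have hbound : ∀ x, ‖(w - Sop) x‖ ≤ Real.sqrt (Q / k) * ‖x‖ := by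
    intro x
    set cv : Fin n → ℝ := fun i => ⟪b i, x⟫_ℝ with hcvdef
    have hx : ∑ i, cv i • b i = x := b.sum_repr' x
    have hdiff : (w - Sop) x = w (∑ i ∈ Finset.univ \ s, cv i • b i) := by
      have h1 : Sop x = w (∑ i ∈ s, cv i • b i) := by
        rw [hSapp, map_sum]
        apply Finset.sum_congr rfl
        intro i _
        rw [_root_.map_smul]
      have h2 : (w - Sop) x = w x - Sop x := rfl
      rw [h2, h1, ← map_sub]
      congr 1
      have h3 : ∑ i ∈ Finset.univ \ s, cv i • b i
          = (∑ i, cv i • b i) - ∑ i ∈ s, cv i • b i :=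
        eq_sub_iff_add_eq.mpr (Finset.sum_sdiff (Finset.subset_univ s))
      rw [h3, hx]
    set y := ∑ i ∈ Finset.univ \ s, cv i • b i with hydef
    have hwy : w y = ∑ i ∈ Finset.univ \ s, cv i • w (b i) := by
      rw [hydef, map_sum]
      apply Finset.sum_congr rfl
      intro i _
      rw [_root_.map_smul]
    have hnorm : ‖w y‖ ^ 2 = ∑ i ∈ Finset.univ \ s, (cv i) ^ 2 * μ i := by
      rw [← real_inner_self_eq_norm_sq, hwy, sum_inner]
      apply Finset.sum_congr rfl
      intro i hi
      rw [inner_sum]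
      rw [Finset.sum_eq_single_of_mem i hi]
      · rw [real_inner_smul_left, real_inner_smul_right, horth i i, if_pos rfl]
        ring
      · intro j hj hne
        rw [real_inner_smul_left, real_inner_smul_right, horth i j, if_neg (Ne.symm hne)]
        ring
    have hle1 : ‖w y‖ ^ 2 ≤ (Q / k) * ‖x‖ ^ 2 := by
      rw [hnorm]
      have hterm : ∀ i ∈ Finset.univ \ s, (cv i) ^ 2 * μ i ≤ (Q / k) * (cv i) ^ 2 := by
        intro i hi
        have hi' : i ∉ s := (Finset.mem_sdiff.mp hi).2
        have hnotlt : ¬ (Q / k < μ i) := by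
          intro hcon
          exact hi' (Finset.mem_filter.mpr ⟨Finset.mem_univ i, hcon⟩)
        have hμle : μ i ≤ Q / k := le_of_not_gt hnotlt
        calc (cv i) ^ 2 * μ i ≤ (cv i) ^ 2 * (Q / k) :=
              mul_le_mul_of_nonneg_left hμle (sq_nonneg _)
        _ = (Q / k) * (cv i) ^ 2 := mul_comm _ _
      have hpars : ∑ i, (cv i) ^ 2 = ‖x‖ ^ 2 := by
        have hp := b.sum_inner_mul_inner x x
        rw [real_inner_self_eq_norm_sq] at hp
        rw [← hp]
        apply Finset.sum_congr rfl
        intro i _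
        have h6 : ⟪x, b i⟫_ℝ = cv i := by
          rw [hcvdef]
          exact (real_inner_comm x (b i)).symm
        have h7 : ⟪b i, x⟫_ℝ = cv i := by simp [hcvdef]
        rw [h6, h7, sq]
      calc ∑ i ∈ Finset.univ \ s, (cv i) ^ 2 * μ i
          ≤ ∑ i ∈ Finset.univ \ s, (Q / k) * (cv i) ^ 2 := Finset.sum_le_sum hterm
      _ = (Q / k) * ∑ i ∈ Finset.univ \ s, (cv i) ^ 2 := by rw [Finset.mul_sum]
      _ ≤ (Q / k) * ∑ i, (cv i) ^ 2 := by
            apply mul_le_mul_of_nonneg_left _ (by positivity)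
            apply Finset.sum_le_sum_of_subset_of_nonneg Finset.sdiff_subset
            intro i _ _
            exact sq_nonneg _
      _ = (Q / k) * ‖x‖ ^ 2 := by rw [hpars]
    rw [hdiff]
    have h5 : ‖w y‖ = Real.sqrt (‖w y‖ ^ 2) := (Real.sqrt_sq (norm_nonneg _)).symm
    rw [h5]
    calc Real.sqrt (‖w y‖ ^ 2) ≤ Real.sqrt ((Q / k) * ‖x‖ ^ 2) := Real.sqrt_le_sqrt hle1
    _ = Real.sqrt (Q / k) * ‖x‖ := by
        rw [Real.sqrt_mul (by positivity), Real.sqrt_sq (norm_nonneg _)]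
  have hapx : apxNum k w ≤ Real.sqrt (Q / k) := by
    calc apxNum k w ≤ ‖w - Sop‖ := apxNum_le k w Sop hrank
    _ ≤ Real.sqrt (Q / k) := ContinuousLinearMap.opNorm_le_bound _ (Real.sqrt_nonneg _) hbound
  calc Real.sqrt k * apxNum k w ≤ Real.sqrt k * Real.sqrt (Q / k) :=
        mul_le_mul_of_nonneg_left hapx (Real.sqrt_nonneg _)
  _ = Real.sqrt ((k : ℝ) * (Q / k)) := (Real.sqrt_mul (by positivity) _).symm
  _ = Real.sqrt Q := by
      congr 1
      field_simp

end Stmt11Aux5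
set_option maxHeartbeats 2000000

theorem stmt_11 {E : Type*} [NormedAddCommGroup E] [NormedSpace ℝ E] [CompleteSpace E]
    (hE : WeakType2 E) :
    ∃ C : ℝ, 0 < C ∧
      ∀ (n : ℕ) (u : EuclideanSpace ℝ (Fin n) →L[ℝ] E)
        (v : E →L[ℝ] EuclideanSpace ℝ (Fin n)) (k : ℕ), 1 ≤ k →
        (k : ℝ) * apxNum k (v.comp u) ≤ C * ellStar v * pi2 (dualCLM u) := by
  obtain ⟨C, hC, hWT⟩ := hE
  refine ⟨2 * C, by positivity, ?_⟩
  intro n u v m hm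
  have hP0 : 0 ≤ pi2 (dualCLM u) := Stmt11Aux.pi2_nonneg _
  have hell0 : 0 ≤ ellStar v := Stmt11Aux.ellStar_nonneg v
  set P := pi2 (dualCLM u) with hPdef
  set L := ellStar v with hLdef
  -- choice of the intermediate index k
  set k := (m + 1) / 2 with hkdef
  have hk1 : 1 ≤ k := by omega
  have h2k1a : 1 ≤ 2 * k - 1 := by omega
  have h2k1 : 2 * k - 1 ≤ m := by omega
  have hm2k : (m : ℝ) ≤ 2 * (k:ℝ) := by exact_mod_cast (by omega : m ≤ 2 * k)
  have hkm : (k:ℝ) ≤ (m:ℝ) := by exact_mod_cast (by omega : k ≤ m)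
  have hm0 : (0:ℝ) ≤ (m:ℝ) := by positivity
  have hsk : (1:ℝ) ≤ Real.sqrt k := by
    rw [show (1:ℝ) = Real.sqrt 1 by rw [Real.sqrt_one]]
    apply Real.sqrt_le_sqrt
    exact_mod_cast hk1
  have hskpos : (0:ℝ) < Real.sqrt k := lt_of_lt_of_le one_pos hsk
  set sk := Real.sqrt k with hskdef
  have hsksq : sk * sk = (k:ℝ) := Real.mul_self_sqrt (by positivity)
  have hskm : sk ≤ (m:ℝ) := by
    have h1 : sk ≤ sk * sk := le_mul_of_one_le_left hskpos.le hsk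
    rw [hsksq] at h1
    exact le_trans h1 hkm
  -- key estimate with an ε of slack
  have key : ∀ ε : ℝ, 0 < ε → (m:ℝ) * apxNum m (v.comp u)
      ≤ 2 * C * L * P + (2 * (m:ℝ) * (P + 1)) * ε := by
    intro ε hε
    obtain ⟨S, hSrank, hSnorm⟩ := Stmt11Aux.exists_apx k hk1 v hε
    obtain ⟨T2, hT2rank, hT2norm⟩ := Stmt11Aux.exists_apx k hk1 ((v - S).comp u) hε
    set B := apxNum k ((v - S).comp u) with hBdef
    set Z := ‖v - S‖ with hZdef
    set av := apxNum k v with havdef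
    have hB0 : 0 ≤ B := Stmt11Aux.apxNum_nonneg _ _
    have hav0 : 0 ≤ av := Stmt11Aux.apxNum_nonneg _ _
    -- step 1: approximation splitting
    have hstep : apxNum m (v.comp u) ≤ B + ε := by
      have hmono : apxNum m (v.comp u) ≤ apxNum (2 * k - 1) (v.comp u) :=
        Stmt11Aux.apxNum_antitone h2k1a h2k1 _
      have hr1 : LinearMap.rank ((S.comp u :
          EuclideanSpace ℝ (Fin n) →L[ℝ] EuclideanSpace ℝ (Fin n)) :
          EuclideanSpace ℝ (Fin n) →ₗ[ℝ] EuclideanSpace ℝ (Fin n)) < (k : Cardinal) := by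
        have hco : ((S.comp u : EuclideanSpace ℝ (Fin n) →L[ℝ] EuclideanSpace ℝ (Fin n)) :
            EuclideanSpace ℝ (Fin n) →ₗ[ℝ] EuclideanSpace ℝ (Fin n))
            = (S : E →ₗ[ℝ] EuclideanSpace ℝ (Fin n)).comp
              (u : EuclideanSpace ℝ (Fin n) →ₗ[ℝ] E) := rfl
        rw [hco]
        exact lt_of_le_of_lt (LinearMap.rank_comp_le_left _ _) hSrank
      have hrank2 : LinearMap.rank ((S.comp u + T2 :
          EuclideanSpace ℝ (Fin n) →L[ℝ] EuclideanSpace ℝ (Fin n)) :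
          EuclideanSpace ℝ (Fin n) →ₗ[ℝ] EuclideanSpace ℝ (Fin n))
          < ((2 * k - 1 : ℕ) : Cardinal) := by
        have hadd : LinearMap.rank ((S.comp u + T2 :
            EuclideanSpace ℝ (Fin n) →L[ℝ] EuclideanSpace ℝ (Fin n)) :
            EuclideanSpace ℝ (Fin n) →ₗ[ℝ] EuclideanSpace ℝ (Fin n))
            ≤ LinearMap.rank ((S.comp u :
              EuclideanSpace ℝ (Fin n) →L[ℝ] EuclideanSpace ℝ (Fin n)) :
              EuclideanSpace ℝ (Fin n) →ₗ[ℝ] EuclideanSpace ℝ (Fin n))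
              + LinearMap.rank ((T2 :
              EuclideanSpace ℝ (Fin n) →L[ℝ] EuclideanSpace ℝ (Fin n)) :
              EuclideanSpace ℝ (Fin n) →ₗ[ℝ] EuclideanSpace ℝ (Fin n)) :=
          LinearMap.rank_add_le _ _
        obtain ⟨a, ha⟩ := Cardinal.lt_aleph0.mp (lt_trans hr1 (Cardinal.nat_lt_aleph0 k))
        obtain ⟨bb, hb⟩ := Cardinal.lt_aleph0.mp (lt_trans hT2rank (Cardinal.nat_lt_aleph0 k))
        rw [ha] at hr1
        rw [hb] at hT2rank
        have ha' : a < k := by exact_mod_cast hr1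
        have hb' : bb < k := by exact_mod_cast hT2rank
        have hab : a + bb < 2 * k - 1 := by omega
        calc LinearMap.rank ((S.comp u + T2 :
            EuclideanSpace ℝ (Fin n) →L[ℝ] EuclideanSpace ℝ (Fin n)) :
            EuclideanSpace ℝ (Fin n) →ₗ[ℝ] EuclideanSpace ℝ (Fin n))
            ≤ _ := hadd
        _ = ((a + bb : ℕ) : Cardinal) := by rw [ha, hb]; exact (Nat.cast_add a bb).symm
        _ < ((2 * k - 1 : ℕ) : Cardinal) := by exact_mod_cast hab
      have hmem : apxNum (2 * k - 1) (v.comp u) ≤ ‖v.comp u - (S.comp u + T2)‖ :=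
        Stmt11Aux.apxNum_le _ _ _ hrank2
      have hrewrite : v.comp u - (S.comp u + T2) = (v - S).comp u - T2 := by
        rw [ContinuousLinearMap.sub_comp]
        abel
      calc apxNum m (v.comp u) ≤ apxNum (2 * k - 1) (v.comp u) := hmono
      _ ≤ ‖v.comp u - (S.comp u + T2)‖ := hmem
      _ = ‖(v - S).comp u - T2‖ := by rw [hrewrite]
      _ ≤ B + ε := hT2norm.le
    -- step 2: spectral estimate plus the π₂ bound
    have hsqrt : sk * B ≤ P * Z := by
      calc sk * B ≤ Real.sqrt (∑ j, ‖((v - S).comp u) (EuclideanSpace.single j 1)‖ ^ 2) :=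
            Stmt11Aux5.sqrtk_apxNum_le_hs hk1 _
      _ ≤ P * Z := Stmt11Aux4.hs_le_pi2_mul u (v - S)
    -- step 3: weak type 2 for v
    have hWTk : sk * av ≤ C * L := hWT n v k hk1
    have hZ' : Z ≤ av + ε := hSnorm.le
    -- combining
    have h5 : (k:ℝ) * B ≤ P * (C * L) + P * (sk * ε) := by
      calc (k:ℝ) * B = sk * (sk * B) := by rw [← hsksq]; ring
      _ ≤ sk * (P * Z) := mul_le_mul_of_nonneg_left hsqrt hskpos.le
      _ = (sk * P) * Z := by ring
      _ ≤ (sk * P) * (av + ε) :=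
          mul_le_mul_of_nonneg_left hZ' (mul_nonneg hskpos.le hP0)
      _ = P * (sk * av) + P * (sk * ε) := by ring
      _ ≤ P * (C * L) + P * (sk * ε) := by
          have hx := mul_le_mul_of_nonneg_left hWTk hP0
          linarith
    have h6 : (m:ℝ) * apxNum m (v.comp u) ≤ (m:ℝ) * B + (m:ℝ) * ε := by
      have hx := mul_le_mul_of_nonneg_left hstep hm0
      nlinarith [hx]
    have h7 : (m:ℝ) * B ≤ 2 * ((k:ℝ) * B) := by
      have hx : (m:ℝ) * B ≤ (2 * (k:ℝ)) * B := mul_le_mul_of_nonneg_right hm2k hB0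
      linarith
    have h8 : P * (sk * ε) ≤ P * ((m:ℝ) * ε) := by
      apply mul_le_mul_of_nonneg_left _ hP0
      exact mul_le_mul_of_nonneg_right hskm hε.le
    have hmε : 0 ≤ (m:ℝ) * ε := mul_nonneg hm0 hε.le
    calc (m:ℝ) * apxNum m (v.comp u) ≤ (m:ℝ) * B + (m:ℝ) * ε := h6
    _ ≤ 2 * ((k:ℝ) * B) + (m:ℝ) * ε := by linarith
    _ ≤ 2 * (P * (C * L) + P * (sk * ε)) + (m:ℝ) * ε := by linarith
    _ ≤ 2 * (P * (C * L) + P * ((m:ℝ) * ε)) + (m:ℝ) * ε := by linarith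
    _ ≤ 2 * C * L * P + (2 * (m:ℝ) * (P + 1)) * ε := by nlinarith [hmε]
  -- remove the slack
  apply le_of_forall_pos_le_add
  intro ε' hε'
  have hP1 : (0:ℝ) ≤ 2 * (m:ℝ) * (P + 1) := by
    have h1 : (0:ℝ) ≤ P + 1 := by linarith
    have h2 : (0:ℝ) ≤ 2 * (m:ℝ) := by positivity
    exact mul_nonneg h2 h1
  have hden : (0:ℝ) < 2 * (m:ℝ) * (P + 1) + 1 := by linarith
  set ε := ε' / (2 * (m:ℝ) * (P + 1) + 1) with hεdef
  have hεpos : 0 < ε := div_pos hε' hden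
  have hkey := key ε hεpos
  have herr : (2 * (m:ℝ) * (P + 1)) * ε ≤ ε' := by
    have hle : (2 * (m:ℝ) * (P + 1)) / (2 * (m:ℝ) * (P + 1) + 1) ≤ 1 := by
      rw [div_le_one hden]
      linarith
    calc (2 * (m:ℝ) * (P + 1)) * ε
        = ((2 * (m:ℝ) * (P + 1)) / (2 * (m:ℝ) * (P + 1) + 1)) * ε' := by
          rw [hεdef]; ring
    _ ≤ 1 * ε' := mul_le_mul_of_nonneg_right hle hε'.le
    _ = ε' := one_mul _
  linarith

end
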